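/- Let N₁, N₂, …, N_L be D×D nonsingular integer matrices that are pairwise commutative and pairwise coprime. Then for any subset {i₁,…,i_p} ⊂ {1,…,L} and any subset {j₁,…,j_q} ⊂ {1,…,L} ∖ {i₁,…,i_p}, the products N_{i₁}N_{i₂}⋯N_{i_p} and N_{j₁}N_{j₂}⋯N_{j_q} are commutative and coprime. -/

import Mathlib

open Matrix

/-- An integer matrix is unimodular if its determinant is `1` or `-1`. -/
def Unimod {D : ℕ} (U : Matrix (Fin D) (Fin D) ℤ) : Prop := U.det = 1 ∨ U.det = -1

/-- `C` is a common right multiple (crm) of the family `M`. -/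
def IsCRM {D n : ℕ} (M : Fin n → Matrix (Fin D) (Fin D) ℤ)
    (C : Matrix (Fin D) (Fin D) ℤ) : Prop :=
  C.det ≠ 0 ∧ ∀ i, ∃ Q : Matrix (Fin D) (Fin D) ℤ, C = M i * Q

/-- `C` is a least common right multiple (lcrm) of the family `M`. -/
def IsLCRM {D n : ℕ} (M : Fin n → Matrix (Fin D) (Fin D) ℤ)
    (C : Matrix (Fin D) (Fin D) ℤ) : Prop :=
  IsCRM M C ∧ ∀ C', IsCRM M C' → ∃ P : Matrix (Fin D) (Fin D) ℤ, C' = C * P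

/-- `C` is a common left multiple (clm) of the family `M`. -/
def IsCLM {D n : ℕ} (M : Fin n → Matrix (Fin D) (Fin D) ℤ)
    (C : Matrix (Fin D) (Fin D) ℤ) : Prop :=
  C.det ≠ 0 ∧ ∀ i, ∃ Q : Matrix (Fin D) (Fin D) ℤ, C = Q * M i

/-- `C` is a least common left multiple (lclm) of the family `M`. -/
def IsLCLM {D n : ℕ} (M : Fin n → Matrix (Fin D) (Fin D) ℤ)
    (C : Matrix (Fin D) (Fin D) ℤ) : Prop :=
  IsCLM M C ∧ ∀ C', IsCLM M C' → ∃ P : Matrix (Fin D) (Fin D) ℤ, C' = P * C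

/-- `B` is a common left divisor (cld) of the family `M`. -/
def IsCLD {D n : ℕ} (M : Fin n → Matrix (Fin D) (Fin D) ℤ)
    (B : Matrix (Fin D) (Fin D) ℤ) : Prop :=
  B.det ≠ 0 ∧ ∀ i, ∃ K : Matrix (Fin D) (Fin D) ℤ, M i = B * K

/-- `B` is a greatest common left divisor (gcld) of the family `M`:
`B` is a cld, and every cld of the family is a left divisor of `B`. -/
def IsGCLD {D n : ℕ} (M : Fin n → Matrix (Fin D) (Fin D) ℤ)
    (B : Matrix (Fin D) (Fin D) ℤ) : Prop :=
  IsCLD M B ∧ ∀ B', IsCLD M B' → ∃ K : Matrix (Fin D) (Fin D) ℤ, B = B' * K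

/-- `A` and `B` are left coprime: every (nonsingular) common left divisor is unimodular. -/
def LeftCoprime {D : ℕ} (A B : Matrix (Fin D) (Fin D) ℤ) : Prop :=
  ∀ C : Matrix (Fin D) (Fin D) ℤ, C.det ≠ 0 →
    (∃ K, A = C * K) → (∃ K, B = C * K) → Unimod C

/-- `A` and `B` are right coprime: every (nonsingular) common right divisor is unimodular. -/
def RightCoprime {D : ℕ} (A B : Matrix (Fin D) (Fin D) ℤ) : Prop :=
  ∀ C : Matrix (Fin D) (Fin D) ℤ, C.det ≠ 0 →
    (∃ K, A = K * C) → (∃ K, B = K * C) → Unimod C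

/-- `A` and `B` are coprime (for commuting matrices left and right coprimeness coincide). -/
def MatCoprime {D : ℕ} (A B : Matrix (Fin D) (Fin D) ℤ) : Prop :=
  LeftCoprime A B ∧ RightCoprime A B

/-- The lattice generated by an integer matrix `M`: all integer combinations `M n`. -/
def LAT {D : ℕ} (M : Matrix (Fin D) (Fin D) ℤ) : Set (Fin D → ℤ) :=
  {v | ∃ n : Fin D → ℤ, v = M.mulVec n}

/-- `𝒩(M)`: the integer vectors of the form `M x` with `x ∈ [0,1)^D`. -/
def NSet {D : ℕ} (M : Matrix (Fin D) (Fin D) ℤ) : Set (Fin D → ℤ) :=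
  {k | ∃ x : Fin D → ℚ, (∀ j, 0 ≤ x j ∧ x j < 1) ∧
      (M.map (Int.cast : ℤ → ℚ)).mulVec x = fun j => (k j : ℚ)}

/-- `r` is the remainder of `m` modulo `M`: `r ∈ 𝒩(M)` and `m − r ∈ LAT(M)`. -/
def IsRem {D : ℕ} (M : Matrix (Fin D) (Fin D) ℤ) (m r : Fin D → ℤ) : Prop :=
  r ∈ NSet M ∧ (m - r) ∈ LAT M

/-- The Euclidean norm on `ℝ^D`. -/
noncomputable def euclNorm {D : ℕ} (v : Fin D → ℝ) : ℝ := Real.sqrt (∑ j, (v j) ^ 2)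

/-- The lattice generated by a real matrix `M`: all integer combinations `M n`. -/
def LATR {D : ℕ} (M : Matrix (Fin D) (Fin D) ℝ) : Set (Fin D → ℝ) :=
  {v | ∃ n : Fin D → ℤ, v = M.mulVec (fun j => (n j : ℝ))}


section Stmt4Aux

variable {D : ℕ}

private abbrev Mat (D : ℕ) := Matrix (Fin D) (Fin D) ℤ

private lemma unimod_of_mul_eq_one {C K : Mat D} (h : C * K = 1) : Unimod C := by
  have hdet : C.det * K.det = 1 := by rw [← Matrix.det_mul, h, Matrix.det_one]
  rcases Int.isUnit_iff.mp (IsUnit.of_mul_eq_one _ hdet) with h' | h'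
  · exact Or.inl h'
  · exact Or.inr h'

private lemma leftCoprime_of_bezout {A B : Mat D}
    (h : ∃ X Y : Mat D, A * X + B * Y = 1) : LeftCoprime A B := by
  rcases h with ⟨X, Y, hXY⟩
  intro C hC h1 h2
  obtain ⟨K1, hK1⟩ := h1
  obtain ⟨K2, hK2⟩ := h2
  have : C * (K1 * X + K2 * Y) = 1 := by
    rw [mul_add, ← mul_assoc, ← mul_assoc, ← hK1, ← hK2, hXY]
  exact unimod_of_mul_eq_one this

private lemma rightCoprime_of_bezout {A B : Mat D}
    (h : ∃ X Y : Mat D, X * A + Y * B = 1) : RightCoprime A B := by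
  rcases h with ⟨X, Y, hXY⟩
  intro C hC h1 h2
  obtain ⟨K1, hK1⟩ := h1
  obtain ⟨K2, hK2⟩ := h2
  have h3 : (X * K1 + Y * K2) * C = 1 := by
    rw [add_mul, mul_assoc, mul_assoc, ← hK1, ← hK2, hXY]
  have hdet : C.det * (X * K1 + Y * K2).det = 1 := by
    rw [mul_comm, ← Matrix.det_mul, h3, Matrix.det_one]
  rcases Int.isUnit_iff.mp (IsUnit.of_mul_eq_one _ hdet) with h' | h'
  · exact Or.inl h'
  · exact Or.inr h'

private lemma bezout_of_leftCoprime {A B : Mat D} (hA : A.det ≠ 0)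
    (h : LeftCoprime A B) : ∃ X Y : Mat D, A * X + B * Y = 1 := by
  classical
  set S : Submodule ℤ (Fin D → ℤ) :=
    LinearMap.range A.mulVecLin ⊔ LinearMap.range B.mulVecLin with hS
  haveI : Module.Finite ℤ S := Module.Finite.iff_fg.mpr (IsNoetherian.noetherian S)
  -- A.mulVecLin is injective
  have hinj : Function.Injective A.mulVecLin := by
    intro x y hxy
    have h1 : A.mulVec x = A.mulVec y := hxy
    have h2 := congrArg (fun v => (Matrix.adjugate A).mulVec v) h1
    simp only [Matrix.mulVec_mulVec, Matrix.adjugate_mul] at h2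
    have h3 : A.det • x = A.det • y := by
      have e : ∀ z : Fin D → ℤ, (A.det • (1 : Mat D)).mulVec z = A.det • z := by
        intro z
        ext i
        simp [Matrix.mulVec, dotProduct, Matrix.one_apply, Finset.mul_sum,
          mul_ite, Finset.sum_ite_eq']
      rw [e x, e y] at h2
      exact h2
    funext i
    have := congrFun h3 i
    simp only [Pi.smul_apply, smul_eq_mul] at this
    exact mul_left_cancel₀ hA this
  obtain ⟨n, bS⟩ := Submodule.basisOfPid (Pi.basisFun ℤ (Fin D)) S
  have hfr : Module.finrank ℤ (Fin D → ℤ) = D := by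
    simp [Module.finrank_pi]
  have hnS : Module.finrank ℤ S = n := by
    rw [Module.finrank_eq_card_basis bS, Fintype.card_fin]
  have hle : n ≤ D := by
    have := Submodule.finrank_le S
    rwa [hnS, hfr] at this
  have hge : D ≤ n := by
    have h1 : Module.finrank ℤ (LinearMap.range A.mulVecLin) = D := by
      rw [LinearMap.finrank_range_of_inj hinj, hfr]
    have h2 : Module.finrank ℤ (LinearMap.range A.mulVecLin) ≤ Module.finrank ℤ S :=
      Submodule.finrank_mono le_sup_left
    rw [h1, hnS] at h2
    exact h2
  have hnD : n = D := le_antisymm hle hge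
  let bS' : Module.Basis (Fin D) ℤ S := bS.reindex (finCongr hnD)
  clear hnS hle hge
  -- the matrix whose columns are the basis vectors
  set C : Mat D := Matrix.of fun i j => (bS' j : Fin D → ℤ) i with hC
  have hCmul : ∀ (c : Fin D → ℤ), C.mulVec c = ∑ j, c j • ((bS' j : Fin D → ℤ)) := by
    intro c
    funext i
    simp [Matrix.mulVec, dotProduct, hC, Finset.sum_apply, Pi.smul_apply, mul_comm]
  have hCS : ∀ c : Fin D → ℤ, C.mulVec c ∈ S := by
    intro c
    rw [hCmul]
    exact Submodule.sum_mem _ fun j _ => Submodule.smul_mem _ _ (bS' j).2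
  have hCrepr : ∀ (v : Fin D → ℤ) (hv : v ∈ S), C.mulVec (fun j => bS'.repr ⟨v, hv⟩ j) = v := by
    intro v hv
    rw [hCmul]
    have h0 := bS'.sum_repr ⟨v, hv⟩
    have h1 := congrArg (fun z : S => (z : Fin D → ℤ)) h0
    simp only [Submodule.coe_sum, Submodule.coe_smul] at h1
    simpa using h1
  -- C left-divides every matrix whose columns lie in S
  have hdiv : ∀ M : Mat D, (∀ j, M.mulVec (Pi.single j 1) ∈ S) → ∃ K : Mat D, M = C * K := by
    intro M hM
    refine ⟨Matrix.of fun k j => bS'.repr ⟨M.mulVec (Pi.single j 1), hM j⟩ k, ?_⟩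
    ext i j
    have h1 := congrFun (hCrepr _ (hM j)) i
    have h2 : M.mulVec (Pi.single j 1) i = M i j := by
      simp [Matrix.mulVec, dotProduct, Pi.single_apply, mul_ite, Finset.sum_ite_eq']
    rw [h2] at h1
    rw [← h1]
    simp [Matrix.mul_apply, Matrix.mulVec, dotProduct]
  have hAcol : ∀ j, A.mulVec (Pi.single j 1) ∈ S :=
    fun j => Submodule.mem_sup_left ⟨Pi.single j 1, rfl⟩
  have hBcol : ∀ j, B.mulVec (Pi.single j 1) ∈ S :=
    fun j => Submodule.mem_sup_right ⟨Pi.single j 1, rfl⟩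
  obtain ⟨KA, hKA⟩ := hdiv A hAcol
  obtain ⟨KB, hKB⟩ := hdiv B hBcol
  have hCdet : C.det ≠ 0 := by
    intro h0
    apply hA
    rw [hKA, Matrix.det_mul, h0, zero_mul]
  have hU : Unimod C := h C hCdet ⟨KA, hKA⟩ ⟨KB, hKB⟩
  -- C is invertible over ℤ, so S = ⊤
  have hCinv : C * (C.det • C.adjugate) = 1 := by
    rw [Matrix.mul_smul, Matrix.mul_adjugate, smul_smul]
    rcases hU with h' | h' <;> simp [h']
  have hsingle : ∀ j : Fin D, ∃ x y : Fin D → ℤ,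
      A.mulVec x + B.mulVec y = Pi.single j 1 := by
    intro j
    have hmem : (Pi.single j 1 : Fin D → ℤ) ∈ S := by
      have : C.mulVec ((C.det • C.adjugate).mulVec (Pi.single j 1)) = Pi.single j 1 := by
        rw [Matrix.mulVec_mulVec, hCinv, Matrix.one_mulVec]
      rw [← this]
      exact hCS _
    rw [hS] at hmem
    obtain ⟨u, hu, v, hv, huv⟩ := Submodule.mem_sup.mp hmem
    obtain ⟨x, hx⟩ := hu
    obtain ⟨y, hy⟩ := hv
    exact ⟨x, y, by rw [← huv, ← hx, ← hy]; rfl⟩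
  choose x y hxy using hsingle
  refine ⟨Matrix.of fun i j => x j i, Matrix.of fun i j => y j i, ?_⟩
  ext i j
  have h1 := congrFun (hxy j) i
  simp only [Pi.add_apply, Pi.single_apply] at h1
  simp only [Matrix.add_apply, Matrix.mul_apply, Matrix.one_apply, Matrix.of_apply]
  rw [← h1]
  rfl

private lemma leftCoprime_transpose_of_rightCoprime {A B : Mat D}
    (h : RightCoprime A B) : LeftCoprime Aᵀ Bᵀ := by
  intro C hC h1 h2
  obtain ⟨K1, hK1⟩ := h1
  obtain ⟨K2, hK2⟩ := h2
  have hA : A = K1ᵀ * Cᵀ := by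
    have := congrArg Matrix.transpose hK1
    simpa [Matrix.transpose_mul] using this
  have hB : B = K2ᵀ * Cᵀ := by
    have := congrArg Matrix.transpose hK2
    simpa [Matrix.transpose_mul] using this
  have hCt : (Cᵀ).det ≠ 0 := by rwa [Matrix.det_transpose]
  have := h Cᵀ hCt ⟨K1ᵀ, hA⟩ ⟨K2ᵀ, hB⟩
  rcases this with h' | h'
  · exact Or.inl (by rwa [Matrix.det_transpose] at h')
  · exact Or.inr (by rwa [Matrix.det_transpose] at h')

private lemma bezout'_of_rightCoprime {A B : Mat D} (hA : A.det ≠ 0)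
    (h : RightCoprime A B) : ∃ X Y : Mat D, X * A + Y * B = 1 := by
  have hAt : (Aᵀ).det ≠ 0 := by rwa [Matrix.det_transpose]
  obtain ⟨X, Y, hXY⟩ := bezout_of_leftCoprime hAt (leftCoprime_transpose_of_rightCoprime h)
  refine ⟨Xᵀ, Yᵀ, ?_⟩
  have := congrArg Matrix.transpose hXY
  simpa [Matrix.transpose_add, Matrix.transpose_mul] using this

private lemma bez_combine_right {A B1 B2 X1 Y1 X2 Y2 : Mat D}
    (h1 : A * X1 + B1 * Y1 = 1) (h2 : A * X2 + B2 * Y2 = 1)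
    (hAB2 : A * B2 = B2 * A) (hB : B1 * B2 = B2 * B1) :
    ∃ X Y : Mat D, A * X + (B1 * B2) * Y = 1 := by
  refine ⟨X2 + B2 * X1 * Y2, Y1 * Y2, ?_⟩
  have key : A * (X2 + B2 * X1 * Y2) + (B1 * B2) * (Y1 * Y2)
      = A * X2 + (A * B2) * (X1 * Y2) + (B1 * B2) * (Y1 * Y2) := by noncomm_ring
  rw [key, hAB2, hB]
  have key2 : A * X2 + (B2 * A) * (X1 * Y2) + (B2 * B1) * (Y1 * Y2)
      = A * X2 + B2 * ((A * X1 + B1 * Y1) * Y2) := by noncomm_ring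
  rw [key2, h1, one_mul, h2]

private lemma bez_combine_left {A1 A2 C X1 Y1 X2 Y2 : Mat D}
    (h1 : A1 * X1 + C * Y1 = 1) (h2 : A2 * X2 + C * Y2 = 1)
    (hA : A2 * A1 = A1 * A2) (hC : A2 * C = C * A2) :
    ∃ X Y : Mat D, (A1 * A2) * X + C * Y = 1 := by
  refine ⟨X1 * X2, A2 * Y1 * X2 + Y2, ?_⟩
  have key : (A1 * A2) * (X1 * X2) + C * (A2 * Y1 * X2 + Y2)
      = (A1 * A2) * (X1 * X2) + (C * A2) * (Y1 * X2) + C * Y2 := by noncomm_ring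
  rw [key, ← hA, ← hC]
  have key2 : (A2 * A1) * (X1 * X2) + (A2 * C) * (Y1 * X2) + C * Y2
      = A2 * ((A1 * X1 + C * Y1) * X2) + C * Y2 := by noncomm_ring
  rw [key2, h1, one_mul, h2]

private lemma bez'_combine_right {A B1 B2 X1 Y1 X2 Y2 : Mat D}
    (h1 : X1 * A + Y1 * B1 = 1) (h2 : X2 * A + Y2 * B2 = 1)
    (hAB2 : B2 * A = A * B2) (hB : B2 * B1 = B1 * B2) :
    ∃ X Y : Mat D, X * A + Y * (B1 * B2) = 1 := by
  refine ⟨X2 + Y2 * X1 * B2, Y2 * Y1, ?_⟩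
  have key : (X2 + Y2 * X1 * B2) * A + (Y2 * Y1) * (B1 * B2)
      = X2 * A + Y2 * (X1 * (B2 * A)) + Y2 * (Y1 * (B1 * B2)) := by noncomm_ring
  rw [key, hAB2, ← hB]
  have key2 : X2 * A + Y2 * (X1 * (A * B2)) + Y2 * (Y1 * (B2 * B1))
      = X2 * A + Y2 * ((X1 * A) * B2 + Y1 * (B2 * B1)) := by noncomm_ring
  rw [key2, hB]
  have key3 : X2 * A + Y2 * ((X1 * A) * B2 + Y1 * (B1 * B2))
      = X2 * A + Y2 * ((X1 * A + Y1 * B1) * B2) := by noncomm_ring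
  rw [key3, h1, one_mul, h2]

private lemma bez'_combine_left {A1 A2 C X1 Y1 X2 Y2 : Mat D}
    (h1 : X1 * A1 + Y1 * C = 1) (h2 : X2 * A2 + Y2 * C = 1)
    (hC : C * A2 = A2 * C) :
    ∃ X Y : Mat D, X * (A1 * A2) + Y * C = 1 := by
  refine ⟨X2 * X1, X2 * Y1 * A2 + Y2, ?_⟩
  have key : (X2 * X1) * (A1 * A2) + (X2 * Y1 * A2 + Y2) * C
      = (X2 * X1) * (A1 * A2) + (X2 * Y1) * (A2 * C) + Y2 * C := by noncomm_ring
  rw [key, ← hC]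
  have key2 : (X2 * X1) * (A1 * A2) + (X2 * Y1) * (C * A2) + Y2 * C
      = X2 * ((X1 * A1 + Y1 * C) * A2) + Y2 * C := by noncomm_ring
  rw [key2, h1, one_mul, h2]


section ProdLemmas

variable {D L : ℕ} (N : Fin L → Matrix (Fin D) (Fin D) ℤ)

private lemma comm_single (hcomm : ∀ i j, N i * N j = N j * N i) (i : Fin L) :
    ∀ s : List (Fin L), N i * (s.map N).prod = (s.map N).prod * N i := by
  intro s
  induction s with
  | nil => simp
  | cons j s ih =>
    simp only [List.map_cons, List.prod_cons]
    rw [← mul_assoc, hcomm i j, mul_assoc, ih, ← mul_assoc]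

private lemma prod_comm_prod (hcomm : ∀ i j, N i * N j = N j * N i) :
    ∀ s t : List (Fin L), (s.map N).prod * (t.map N).prod = (t.map N).prod * (s.map N).prod := by
  intro s t
  induction s with
  | nil => simp
  | cons i s ih =>
    simp only [List.map_cons, List.prod_cons]
    rw [mul_assoc, ih, ← mul_assoc, comm_single N hcomm i t, mul_assoc]

private lemma bez_single_left (hns : ∀ i, (N i).det ≠ 0)
    (hcomm : ∀ i j, N i * N j = N j * N i)
    (hcop : ∀ i j, i ≠ j → MatCoprime (N i) (N j)) (i : Fin L) :
    ∀ t : List (Fin L), i ∉ t →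
      ∃ X Y : Matrix (Fin D) (Fin D) ℤ, N i * X + (t.map N).prod * Y = 1 := by
  intro t
  induction t with
  | nil => intro _; exact ⟨(N i).adjugate * 0, 1, by simp⟩
  | cons j t ih =>
    intro hit
    have hij : i ≠ j := fun h => hit (h ▸ List.mem_cons_self (a := j) (l := t))
    have hit' : i ∉ t := fun h => hit (List.mem_cons_of_mem j h)
    obtain ⟨X1, Y1, h1⟩ := bezout_of_leftCoprime (hns i) (hcop i j hij).1
    obtain ⟨X2, Y2, h2⟩ := ih hit'
    simp only [List.map_cons, List.prod_cons]
    exact bez_combine_right h1 h2 (comm_single N hcomm i t) (comm_single N hcomm j t)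

private lemma bez_left (hns : ∀ i, (N i).det ≠ 0)
    (hcomm : ∀ i j, N i * N j = N j * N i)
    (hcop : ∀ i j, i ≠ j → MatCoprime (N i) (N j)) :
    ∀ s t : List (Fin L), (∀ i ∈ s, i ∉ t) →
      ∃ X Y : Matrix (Fin D) (Fin D) ℤ, (s.map N).prod * X + (t.map N).prod * Y = 1 := by
  intro s t
  induction s with
  | nil => intro _; exact ⟨1, 0, by simp⟩
  | cons i s ih =>
    intro hst
    obtain ⟨X1, Y1, h1⟩ := bez_single_left N hns hcomm hcop i t (hst i (List.mem_cons_self (a := i) (l := s)))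
    obtain ⟨X2, Y2, h2⟩ := ih (fun k hk => hst k (List.mem_cons_of_mem i hk))
    simp only [List.map_cons, List.prod_cons]
    exact bez_combine_left h1 h2 ((comm_single N hcomm i s).symm) (prod_comm_prod N hcomm s t)

private lemma bez_single_right (hns : ∀ i, (N i).det ≠ 0)
    (hcomm : ∀ i j, N i * N j = N j * N i)
    (hcop : ∀ i j, i ≠ j → MatCoprime (N i) (N j)) (i : Fin L) :
    ∀ t : List (Fin L), i ∉ t →
      ∃ X Y : Matrix (Fin D) (Fin D) ℤ, X * N i + Y * (t.map N).prod = 1 := by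
  intro t
  induction t with
  | nil => intro _; exact ⟨0, 1, by simp⟩
  | cons j t ih =>
    intro hit
    have hij : i ≠ j := fun h => hit (h ▸ List.mem_cons_self (a := j) (l := t))
    have hit' : i ∉ t := fun h => hit (List.mem_cons_of_mem j h)
    obtain ⟨X1, Y1, h1⟩ := bezout'_of_rightCoprime (hns i) (hcop i j hij).2
    obtain ⟨X2, Y2, h2⟩ := ih hit'
    simp only [List.map_cons, List.prod_cons]
    exact bez'_combine_right h1 h2 ((comm_single N hcomm i t).symm) ((comm_single N hcomm j t).symm)

private lemma bez_right (hns : ∀ i, (N i).det ≠ 0)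
    (hcomm : ∀ i j, N i * N j = N j * N i)
    (hcop : ∀ i j, i ≠ j → MatCoprime (N i) (N j)) :
    ∀ s t : List (Fin L), (∀ i ∈ s, i ∉ t) →
      ∃ X Y : Matrix (Fin D) (Fin D) ℤ, X * (s.map N).prod + Y * (t.map N).prod = 1 := by
  intro s t
  induction s with
  | nil => intro _; exact ⟨1, 0, by simp⟩
  | cons i s ih =>
    intro hst
    obtain ⟨X1, Y1, h1⟩ := bez_single_right N hns hcomm hcop i t (hst i (List.mem_cons_self (a := i) (l := s)))
    obtain ⟨X2, Y2, h2⟩ := ih (fun k hk => hst k (List.mem_cons_of_mem i hk))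
    simp only [List.map_cons, List.prod_cons]
    exact bez'_combine_left h1 h2 ((prod_comm_prod N hcomm t s))

end ProdLemmas

end Stmt4Aux

/-- products over disjoint subsets of a pairwise commutative and coprime
family are commutative and coprime. -/
theorem stmt4 {D L : ℕ} (N : Fin L → Matrix (Fin D) (Fin D) ℤ)
    (hns : ∀ i, (N i).det ≠ 0)
    (hcomm : ∀ i j, N i * N j = N j * N i)
    (hcop : ∀ i j, i ≠ j → MatCoprime (N i) (N j))
    (s t : List (Fin L)) (hs : s.Nodup) (ht : t.Nodup)
    (hst : ∀ i ∈ s, i ∉ t) :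
    (s.map N).prod * (t.map N).prod = (t.map N).prod * (s.map N).prod ∧
      MatCoprime ((s.map N).prod) ((t.map N).prod) := by
  refine ⟨prod_comm_prod N hcomm s t, ?_, ?_⟩
  · exact leftCoprime_of_bezout (bez_left N hns hcomm hcop s t hst)
  · exact rightCoprime_of_bezout (bez_right N hns hcomm hcop s t hst)
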